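/- Suppose the moment polytope Δ of a compact symplectic toric manifold contains the image Ψ(Diamond^n(a)) of the diamond Diamond^n(a) = {x ∈ ℝⁿ : Σ|x_j| < a/2} under some Ψ ∈ SL(n, ℤ) in its interior, and Δ is obtained from a monotone case as t₁·Δ' ⊂ Δ with Δ' reflexive of dimension n ≤ 8 satisfying the Ewald property. Then Diamond^n(2t₁) embeds in Δ up to SL(n,ℤ): there exists Ψ ∈ SL(n,ℤ) with Ψ(Diamond^n(2t₁)) ⊂ Δ. -/

import Mathlib

open Matrix

/-- The open diamond `◇ⁿ(a) = {x ∈ ℝⁿ | Σ |xⱼ| < a/2}`. -/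
def diamond (n : ℕ) (a : ℝ) : Set (Fin n → ℝ) := {x | ∑ j, |x j| < a / 2}

/-- If `Δ = {x | ⟨x, vⱼ⟩ ≤ λⱼ}` is the Delzant polytope of a toric manifold, `t₁ > 0`
the first dimension-drop time (so `t₁ ≤ λⱼ` for all `j`, giving `t₁ • Δ' ⊆ Δ` for the
reflexive polytope `Δ' = {x | ⟨x, vⱼ⟩ ≤ 1}`), `n ≤ 8`, and `Δ'` satisfies the Ewald
property (a ℤ-basis `b` of `ℤⁿ` with `±bⱼ ∈ Δ'`), then some `Ψ ∈ SL(n, ℤ)` maps the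
diamond `◇ⁿ(2t₁)` into `Δ`. -/
theorem stmt19 (n d : ℕ) (hn : n ≤ 8) (v : Fin d → Fin n → ℝ) (lam : Fin d → ℝ)
    (t₁ : ℝ) (ht₁ : 0 < t₁) (hlam : ∀ j, t₁ ≤ lam j)
    (Δ : Set (Fin n → ℝ)) (hΔ : Δ = {x | ∀ j, x ⬝ᵥ v j ≤ lam j})
    (Δ' : Set (Fin n → ℝ)) (hΔ' : Δ' = {x | ∀ j, x ⬝ᵥ v j ≤ 1})
    (b : Module.Basis (Fin n) ℤ (Fin n → ℤ))
    (hEwald : ∀ j, (fun l => ((b j) l : ℝ)) ∈ Δ' ∧ (fun l => (-((b j) l) : ℝ)) ∈ Δ') :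
    ∃ A : Matrix (Fin n) (Fin n) ℤ, A.det = 1 ∧
      ∀ x ∈ diamond n (2 * t₁), (A.map fun z => (z : ℝ)).mulVec x ∈ Δ := by
  subst hΔ hΔ'
  -- the key bound: each basis vector pairs with every normal in [-1,1]
  have hbound : ∀ j k, |∑ l, ((b j) l : ℝ) * v k l| ≤ 1 := by
    intro j k
    obtain ⟨h1, h2⟩ := hEwald j
    have h1' := h1 k
    have h2' := h2 k
    simp only [Set.mem_setOf_eq, dotProduct] at h1' h2'
    rw [abs_le]
    constructor
    · have : ∑ l, (-((b j) l) : ℝ) * v k l = -∑ l, ((b j) l : ℝ) * v k l := by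
        rw [← Finset.sum_neg_distrib]; congr 1; ext l; ring
      rw [this] at h2'
      linarith
    · exact h1'
  rcases Nat.eq_zero_or_pos n with hn0 | hn0
  · subst hn0
    refine ⟨1, Matrix.det_one, ?_⟩
    intro x _ k
    simp only [Set.mem_setOf_eq, dotProduct, Finset.univ_eq_empty, Finset.sum_empty]
    linarith [hlam k]
  · -- n ≥ 1
    set M : Matrix (Fin n) (Fin n) ℤ := Matrix.of fun i j => (b j) i with hMdef
    have hM : IsUnit M.det := by
      have h := (Pi.basisFun ℤ (Fin n)).isUnit_det b
      rwa [Module.Basis.det_apply, show (Pi.basisFun ℤ (Fin n)).toMatrix b = M by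
        ext i j; simp [Module.Basis.toMatrix, M]] at h
    have hdet : M.det = 1 ∨ M.det = -1 := Int.isUnit_iff.mp hM
    set i0 : Fin n := ⟨0, hn0⟩
    set c : Fin n → ℤ := fun j => if j = i0 then M.det else 1 with hcdef
    have hc1 : ∀ j, |(c j : ℝ)| = 1 := by
      intro j
      rcases hdet with h | h <;> simp only [hcdef] <;> split <;> simp [h]
    refine ⟨Matrix.of fun i j => c j * M i j, ?_, ?_⟩
    · rw [Matrix.det_mul_row]
      have : ∏ j, c j = M.det := by
        simp only [hcdef]
        rw [Finset.prod_ite_eq' Finset.univ i0 (fun _ => M.det)]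
        simp
      rw [this]
      rcases hdet with h | h <;> rw [h] <;> norm_num
    · intro x hx k
      simp only [diamond, Set.mem_setOf_eq] at hx
      have hx' : ∑ j, |x j| < t₁ := by linarith
      simp only [Set.mem_setOf_eq, dotProduct, Matrix.mulVec, Matrix.map_apply,
        Matrix.of_apply, dotProduct]
      have hswap : ∑ i, (∑ j, ((c j * M i j : ℤ) : ℝ) * x j) * v k i
          = ∑ j, (c j : ℝ) * x j * ∑ i, ((b j) i : ℝ) * v k i := by
        simp_rw [Finset.sum_mul]
        rw [Finset.sum_comm]
        refine Finset.sum_congr rfl fun j _ => ?_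
        rw [Finset.mul_sum]
        refine Finset.sum_congr rfl fun i _ => ?_
        simp only [hMdef, Matrix.of_apply]
        push_cast
        ring
      rw [hswap]
      have hterm : ∀ j ∈ Finset.univ, (c j : ℝ) * x j * ∑ i, ((b j) i : ℝ) * v k i ≤ |x j| := by
        intro j _
        calc (c j : ℝ) * x j * ∑ i, ((b j) i : ℝ) * v k i
            ≤ |(c j : ℝ) * x j * ∑ i, ((b j) i : ℝ) * v k i| := le_abs_self _
          _ = |(c j : ℝ)| * |x j| * |∑ i, ((b j) i : ℝ) * v k i| := by
              rw [abs_mul, abs_mul]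
          _ ≤ |x j| := by
              rw [hc1 j, one_mul]
              exact mul_le_of_le_one_right (abs_nonneg _) (hbound j k)
      have hsum : ∑ j, (c j : ℝ) * x j * ∑ i, ((b j) i : ℝ) * v k i ≤ ∑ j, |x j| :=
        Finset.sum_le_sum hterm
      linarith [hlam k]
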